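/- Let π be a probability measure on ℝ × ℝ such that the map (x,y) ↦ x is π-integrable, π(Mᶜ) = 0, and for every s ≥ 0 one has ∫_{{(x,y) : y ≥ s}} x dπ(x,y) ≥ s · π({(x,y) : y ≥ s}). Then the conditional tail mean is nondecreasing: for all real numbers 0 ≤ s₁ ≤ s₂ with π({(x,y) : y ≥ s₂}) > 0, one has (∫_{{y ≥ s₁}} x dπ) / π({(x,y) : y ≥ s₁}) ≤ (∫_{{y ≥ s₂}} x dπ) / π({(x,y) : y ≥ s₂}). -/

import Mathlib

open MeasureTheory Set

noncomputable section

/-- The set `M = {(x,y) : y ≥ 0 and y ≥ x}`. -/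
def MSet : Set (ℝ × ℝ) := {p : ℝ × ℝ | 0 ≤ p.2 ∧ p.1 ≤ p.2}

/-- A probability measure on `ℝ` is centred if the identity is integrable with mean `0`. -/
def Centred (μ : Measure ℝ) : Prop :=
  Integrable (fun x : ℝ => x) μ ∧ (∫ x, x ∂μ) = 0

/-- Strict supermodularity of a bivariate function. -/
def StrictlySupermodular (F : ℝ × ℝ → ℝ) : Prop :=
  ∀ w₁ w₂ s₁ s₂ : ℝ, w₁ < w₂ → s₁ < s₂ →
    F (w₁, s₂) + F (w₂, s₁) < F (w₁, s₁) + F (w₂, s₂)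

/-- `F` is serrated with ridge `a : ℝ → EReal`: for every `w`, `s ↦ F (w, s)` is
strictly increasing on `{s | s < a w}` and strictly decreasing on `{s | a w < s}`. -/
def SerratedWithRidge (F : ℝ × ℝ → ℝ) (a : ℝ → EReal) : Prop :=
  ∀ w : ℝ,
    StrictMonoOn (fun s : ℝ => F (w, s)) {s : ℝ | (s : EReal) < a w} ∧
    StrictAntiOn (fun s : ℝ => F (w, s)) {s : ℝ | a w < (s : EReal)}

/-- Rogers' conditions for `π` to be the joint law of the terminal value and the
running maximum of a UI martingale started at `0` with terminal law `μ`. -/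
def RogersAdmissible (μ : Measure ℝ) (π : Measure (ℝ × ℝ)) : Prop :=
  Integrable (fun p : ℝ × ℝ => p.1) π ∧
  (∫ p : ℝ × ℝ, p.1 ∂π) = 0 ∧
  π MSetᶜ = 0 ∧
  (∀ s : ℝ, 0 ≤ s →
    s * (π {p : ℝ × ℝ | s ≤ p.2}).toReal ≤ ∫ p in {p : ℝ × ℝ | s ≤ p.2}, p.1 ∂π) ∧
  Measure.map Prod.fst π = μ

/-- The barycenter function of `μ`. -/
def barycenter (μ : Measure ℝ) (w : ℝ) : ℝ :=
  if 0 < (μ (Ici w)).toReal then (∫ x in Ici w, x ∂μ) / (μ (Ici w)).toReal else w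

/-- `g(w) = min(β_μ(w), max(a(w), 0, w))`, the max computed in `EReal`. -/
def ridgeG (μ : Measure ℝ) (a : ℝ → EReal) (w : ℝ) : ℝ :=
  (min ((barycenter μ w : ℝ) : EReal) (max (a w) (max (0 : EReal) ((w : ℝ) : EReal)))).toReal

/-- monotonicity of the conditional tail mean. -/
theorem tail_mean_nondecreasing (π : Measure (ℝ × ℝ)) [IsProbabilityMeasure π]
    (h_int : Integrable (fun p : ℝ × ℝ => p.1) π)
    (h_supp : π MSetᶜ = 0)
    (h_tail : ∀ s : ℝ, 0 ≤ s →
      s * (π {p : ℝ × ℝ | s ≤ p.2}).toReal ≤ ∫ p in {p : ℝ × ℝ | s ≤ p.2}, p.1 ∂π)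
    (s₁ s₂ : ℝ) (hs₁ : 0 ≤ s₁) (hs : s₁ ≤ s₂)
    (hpos : 0 < (π {p : ℝ × ℝ | s₂ ≤ p.2}).toReal) :
    (∫ p in {p : ℝ × ℝ | s₁ ≤ p.2}, p.1 ∂π) / (π {p : ℝ × ℝ | s₁ ≤ p.2}).toReal ≤
      (∫ p in {p : ℝ × ℝ | s₂ ≤ p.2}, p.1 ∂π) / (π {p : ℝ × ℝ | s₂ ≤ p.2}).toReal := by
  set A1 : Set (ℝ × ℝ) := {p : ℝ × ℝ | s₁ ≤ p.2} with hA1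
  set A2 : Set (ℝ × ℝ) := {p : ℝ × ℝ | s₂ ≤ p.2} with hA2
  have hm1 : MeasurableSet A1 := measurableSet_le measurable_const measurable_snd
  have hm2 : MeasurableSet A2 := measurableSet_le measurable_const measurable_snd
  have hsub : A2 ⊆ A1 := fun p hp => le_trans hs hp
  have hfin1 : π A1 ≠ ⊤ := measure_ne_top π A1
  have hfin2 : π A2 ≠ ⊤ := measure_ne_top π A2
  have hp1 : 0 < (π A1).toReal :=
    lt_of_lt_of_le hpos (ENNReal.toReal_mono hfin1 (measure_mono hsub))
  have hint1 : IntegrableOn (fun p : ℝ × ℝ => p.1) A1 π := h_int.integrableOn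
  have hint2 : IntegrableOn (fun p : ℝ × ℝ => p.1) A2 π := h_int.integrableOn
  -- π D and splitting
  have hmeasD : π (A1 \ A2) = π A1 - π A2 := measure_diff hsub hm2.nullMeasurableSet hfin2
  have hDtoReal : (π (A1 \ A2)).toReal = (π A1).toReal - (π A2).toReal := by
    rw [hmeasD, ENNReal.toReal_sub_of_le (measure_mono hsub) hfin1]
  have hsplit : ∫ p in A1 \ A2, p.1 ∂π =
      (∫ p in A1, p.1 ∂π) - ∫ p in A2, p.1 ∂π :=
    integral_diff hm2 hint1 hsub
  -- a.e. bound on A1 \ A2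
  have hae : ∀ᵐ p ∂π, p ∈ MSet := by
    rw [ae_iff]
    exact h_supp
  have hbound : ∫ p in A1 \ A2, p.1 ∂π ≤ s₂ * (π (A1 \ A2)).toReal := by
    have h1 : ∫ p in A1 \ A2, p.1 ∂π ≤ ∫ _p in A1 \ A2, s₂ ∂π := by
      apply setIntegral_mono_ae_restrict (hint1.mono_set diff_subset)
        (integrableOn_const (measure_ne_top π _))
      have h2 := (ae_restrict_iff' (hm1.diff hm2)).2
        (ae_of_all π (fun p (hp : p ∈ A1 \ A2) => hp))
      filter_upwards [ae_restrict_of_ae hae, h2] with p hpM hpD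
      exact le_of_lt (lt_of_le_of_lt hpM.2 (lt_of_not_ge hpD.2))
    simpa [mul_comm, measureReal_def] using h1.trans_eq (setIntegral_const s₂)
  have htail2 : s₂ * (π A2).toReal ≤ ∫ p in A2, p.1 ∂π := h_tail s₂ (hs₁.trans hs)
  rw [div_le_div_iff₀ hp1 hpos]
  have h3 : (∫ p in A1, p.1 ∂π) - ∫ p in A2, p.1 ∂π ≤
      s₂ * ((π A1).toReal - (π A2).toReal) := by
    rw [← hDtoReal, ← hsplit]; exact hbound
  have hd : 0 ≤ (π A1).toReal - (π A2).toReal := by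
    linarith [ENNReal.toReal_mono hfin1 (measure_mono hsub)]
  nlinarith [mul_le_mul_of_nonneg_right h3 hpos.le,
    mul_le_mul_of_nonneg_right htail2 hd]
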